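/- Let σ ⊂ ℝ^N be an n-simplex, let 𝒜 ⊂ σ be compact, and let z be a point of the simplicial interior of σ with z ∉ 𝒜. Then the cone 𝒞 = {αx + (1−α)z ∈ σ : x ∈ 𝒜, α ≥ 0} is compact and contains 𝒜 and z. -/

import Mathlib

/-- The simplicial interior of the simplex spanned by `v 0, …, v n`:
points all of whose barycentric coordinates are strictly positive. -/
def simplexInterior {E : Type*} [AddCommGroup E] [Module ℝ E] {n : ℕ}
    (v : Fin (n + 1) → E) : Set E :=
  {y | ∃ β : Fin (n + 1) → ℝ, (∀ i, 0 < β i) ∧ (∑ i, β i) = 1 ∧ y = ∑ i, β i • v i}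

/-- The cone `𝒞 = {αx + (1−α)z ∈ σ : x ∈ 𝒜, α ≥ 0}`. -/
def simplexCone {E : Type*} [AddCommGroup E] [Module ℝ E]
    (σ 𝒜 : Set E) (z : E) : Set E :=
  {y ∈ σ | ∃ x ∈ 𝒜, ∃ α : ℝ, 0 ≤ α ∧ y = α • x + (1 - α) • z}

/-- for an `n`-simplex `σ ⊂ ℝ^N`, a nonempty compact `𝒜 ⊆ σ`, and a point
`z` of the simplicial interior of `σ` with `z ∉ 𝒜`, the cone
`𝒞 = {αx + (1−α)z ∈ σ : x ∈ 𝒜, α ≥ 0}` is compact and contains `𝒜` and `z`. -/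
theorem stmt_5 {N n : ℕ} (v : Fin (n + 1) → EuclideanSpace ℝ (Fin N))
    (hv : AffineIndependent ℝ v)
    (𝒜 : Set (EuclideanSpace ℝ (Fin N)))
    (h𝒜σ : 𝒜 ⊆ convexHull ℝ (Set.range v)) (h𝒜c : IsCompact 𝒜) (h𝒜ne : 𝒜.Nonempty)
    (z : EuclideanSpace ℝ (Fin N)) (hz : z ∈ simplexInterior v) (hz𝒜 : z ∉ 𝒜) :
    IsCompact (simplexCone (convexHull ℝ (Set.range v)) 𝒜 z) ∧
    𝒜 ⊆ simplexCone (convexHull ℝ (Set.range v)) 𝒜 z ∧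
    z ∈ simplexCone (convexHull ℝ (Set.range v)) 𝒜 z := by
  set σ : Set (EuclideanSpace ℝ (Fin N)) := convexHull ℝ (Set.range v) with hσdef
  have hσc : IsCompact σ := (Set.finite_range v).isCompact_convexHull ℝ
  have hzσ : z ∈ σ := by
    obtain ⟨β, hβpos, hβsum, hβeq⟩ := hz
    rw [hβeq]
    exact (convex_convexHull ℝ _).sum_mem (fun i _ => (hβpos i).le) hβsum
      (fun i _ => subset_convexHull ℝ _ ⟨i, rfl⟩)
  -- distance bound
  have h𝒜cl : IsClosed 𝒜 := h𝒜c.isClosed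
  have hd : 0 < Metric.infDist z 𝒜 := by
    exact (h𝒜cl.notMem_iff_infDist_pos h𝒜ne).mp hz𝒜
  set d := Metric.infDist z 𝒜 with hddef
  obtain ⟨R, hR⟩ := Metric.isBounded_iff_subset_closedBall z |>.mp hσc.isBounded
  set C := R / d with hCdef
  have hkey : simplexCone σ 𝒜 z =
      σ ∩ ((fun p : (EuclideanSpace ℝ (Fin N)) × ℝ => p.2 • p.1 + (1 - p.2) • z) ''
        (𝒜 ×ˢ Set.Icc 0 C)) := by
    ext y
    constructor
    · rintro ⟨hyσ, x, hx, α, hα, rfl⟩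
      refine ⟨hyσ, ⟨(x, α), ⟨hx, hα, ?_⟩, rfl⟩⟩
      have hdx : d ≤ dist z x := Metric.infDist_le_dist_of_mem hx
      have hyz : α • x + (1 - α) • z - z = α • (x - z) := by
        module
      have h1 : dist (α • x + (1 - α) • z) z ≤ R := by
        have := hR hyσ; simpa [Metric.mem_closedBall] using this
      have h2 : dist (α • x + (1 - α) • z) z = α * dist x z := by
        rw [dist_eq_norm, hyz, norm_smul, Real.norm_of_nonneg hα, ← dist_eq_norm]
      have : α * d ≤ R := by
        calc α * d ≤ α * dist x z := by
              apply mul_le_mul_of_nonneg_left _ hα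
              rwa [dist_comm] at hdx
          _ ≤ R := by rw [← h2]; exact h1
      rw [hCdef]
      exact (le_div_iff₀ hd).mpr this
    · rintro ⟨hyσ, ⟨x, α⟩, ⟨hx, hα0, _⟩, rfl⟩
      exact ⟨hyσ, x, hx, α, hα0, rfl⟩
  have himg : IsCompact ((fun p : (EuclideanSpace ℝ (Fin N)) × ℝ => p.2 • p.1 + (1 - p.2) • z) ''
      (𝒜 ×ˢ Set.Icc 0 C)) := by
    apply (h𝒜c.prod isCompact_Icc).image
    fun_prop
  refine ⟨?_, ?_, ?_⟩
  · rw [hkey]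
    exact hσc.inter_right himg.isClosed
  · intro x hx
    exact ⟨h𝒜σ hx, x, hx, 1, zero_le_one, by simp⟩
  · obtain ⟨x, hx⟩ := h𝒜ne
    exact ⟨hzσ, x, hx, 0, le_refl 0, by simp⟩
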